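/- For every type α, the free group on α is residually finite. -/

import Mathlib

namespace RFAux

/-- Any injective-on-a-set map of a finite type extends to a permutation. -/
lemma exists_perm_extendOn {β : Type*} [Finite β] {s : Set β} {f : β → β}
    (hf : Set.InjOn f s) : ∃ σ : Equiv.Perm β, ∀ x ∈ s, σ x = f x := by
  classical
  have : Fintype β := Fintype.ofFinite β
  have hbij : Set.BijOn f s (f '' s) := hf.bijOn_image
  let e : s ≃ (f '' s) := hbij.equiv f
  have hcard : Fintype.card (↥sᶜ) = Fintype.card (↥(f '' s)ᶜ) := by
    have h1 : Fintype.card (f '' s) = Fintype.card s := Fintype.card_congr e.symm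
    have h2 := Fintype.card_compl_set s
    have h3 := Fintype.card_compl_set (f '' s)
    omega
  let e' : (↥sᶜ) ≃ (↥(f '' s)ᶜ) := Fintype.equivOfCardEq hcard
  refine ⟨(Equiv.Set.sumCompl s).symm.trans ((e.sumCongr e').trans
    (Equiv.Set.sumCompl (f '' s))), ?_⟩
  intro x hx
  have h1 : (Equiv.Set.sumCompl s).symm x = Sum.inl ⟨x, hx⟩ :=
    Equiv.Set.sumCompl_symm_apply_of_mem hx
  simp only [Equiv.trans_apply, h1, Equiv.sumCongr_apply, Sum.map_inl,
    Equiv.Set.sumCompl_apply_inl]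
  rfl

variable {α : Type*}

/-- `u` has no adjacent cancelling pair. -/
def Hred (u : List (α × Bool)) : Prop :=
  ∀ (j : ℕ) (a : α) (b : Bool), u[j]? = some (a, b) → u[j+1]? ≠ some (a, !b)

/-- The set of points constrained for the generator `a`. -/
def S (u : List (α × Bool)) (a : α) : Set (Fin (u.length + 1)) :=
  {v | u[(v : ℕ)]? = some (a, true) ∨ (0 < (v : ℕ) ∧ u[(v : ℕ) - 1]? = some (a, false))}

open Classical in
/-- The partial map for generator `a`. -/
noncomputable def pf (u : List (α × Bool)) (a : α) (v : Fin (u.length + 1)) :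
    Fin (u.length + 1) :=
  if h : u[(v : ℕ)]? = some (a, true) then
    ⟨(v : ℕ) + 1, by
      have := (List.getElem?_eq_some_iff.mp h).choose
      omega⟩
  else if _ : 0 < (v : ℕ) ∧ u[(v : ℕ) - 1]? = some (a, false) then
    ⟨(v : ℕ) - 1, by omega⟩
  else v

lemma pf_injOn (u : List (α × Bool)) (hred : Hred u) (a : α) :
    Set.InjOn (pf u a) (S u a) := by
  classical
  have hnb : ∀ x : Fin (u.length + 1), u[(x : ℕ)]? = some (a, true) →
      ¬ (0 < (x : ℕ) ∧ u[(x : ℕ) - 1]? = some (a, false)) := by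
    rintro x hx ⟨hpos, hx'⟩
    have h1 : ((x : ℕ) - 1) + 1 = (x : ℕ) := by omega
    exact hred ((x : ℕ) - 1) a false hx' (by rw [h1]; simpa using hx)
  intro v hv w hw hvw
  unfold pf at hvw
  rcases hv with h1 | h1
  · rcases hw with h2 | h2
    · rw [dif_pos h1, dif_pos h2] at hvw
      simp only [Fin.mk.injEq] at hvw
      exact Fin.ext (by omega)
    · rw [dif_pos h1, dif_neg (hnb w · h2), dif_pos h2] at hvw
      simp only [Fin.mk.injEq] at hvw
      exfalso
      have hw1 : u[(v : ℕ) + 1]? = some (a, false) := by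
        rw [hvw]; exact h2.2
      exact hred (v : ℕ) a true h1 (by simpa using hw1)
  · rcases hw with h2 | h2
    · rw [dif_pos h2, dif_neg (hnb v · h1), dif_pos h1] at hvw
      simp only [Fin.mk.injEq] at hvw
      exfalso
      have hw1 : u[(w : ℕ) + 1]? = some (a, false) := by
        rw [← hvw]; exact h1.2
      exact hred (w : ℕ) a true h2 (by simpa using hw1)
    · rw [dif_neg (hnb v · h1), dif_pos h1, dif_neg (hnb w · h2), dif_pos h2] at hvw
      simp only [Fin.mk.injEq] at hvw
      exact Fin.ext (by omega)

/-- The chosen extending permutation for the generator `a`. -/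
noncomputable def σ (u : List (α × Bool)) (hred : Hred u) (a : α) :
    Equiv.Perm (Fin (u.length + 1)) :=
  (exists_perm_extendOn (pf_injOn u hred a)).choose

lemma σ_spec (u : List (α × Bool)) (hred : Hred u) (a : α) :
    ∀ v ∈ S u a, σ u hred a v = pf u a v :=
  (exists_perm_extendOn (pf_injOn u hred a)).choose_spec

lemma key (u : List (α × Bool)) (hred : Hred u) :
    ∀ k (hk : k ≤ u.length),
      (((u.take k).reverse.map
        (fun x => cond x.2 (σ u hred x.1) (σ u hred x.1)⁻¹)).prod)
        ⟨0, by omega⟩ = ⟨k, by omega⟩ := by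
  intro k
  induction k with
  | zero => intro _; simp
  | succ k ih =>
    intro hk
    have hk' : k < u.length := hk
    have hget : u[(k : ℕ)]? = some u[k] := List.getElem?_eq_some_iff.mpr ⟨hk', rfl⟩
    have htake : u.take (k + 1) = u.take k ++ [u[k]] := by
      rw [List.take_succ, hget]; rfl
    rw [htake]
    simp only [List.reverse_append, List.reverse_singleton, List.singleton_append,
      List.map_cons, List.prod_cons, Equiv.Perm.mul_apply]
    rw [ih (le_of_lt hk')]
    rcases hab : u[k] with ⟨a, b⟩
    rw [hab] at hget
    cases b
    · -- inverse letter: need (σ a)⁻¹ ⟨k⟩ = ⟨k+1⟩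
      simp only [cond_false]
      have hmem : (⟨k + 1, by omega⟩ : Fin (u.length + 1)) ∈ S u a := by
        right
        exact ⟨by simp, by simpa using hget⟩
      have hnot1 : ¬ u[((⟨k + 1, by omega⟩ : Fin (u.length + 1)) : ℕ)]? = some (a, true) := by
        intro hcon
        exact hred k a false hget (by simpa using hcon)
      have hσ : σ u hred a ⟨k + 1, by omega⟩ = ⟨k, by omega⟩ := by
        rw [σ_spec u hred a _ hmem, pf, dif_neg hnot1,
          dif_pos ⟨by simp, by simpa using hget⟩]
        simp
      rw [Equiv.Perm.inv_def, Equiv.symm_apply_eq, hσ]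
    · -- positive letter: σ a ⟨k⟩ = ⟨k+1⟩
      simp only [cond_true]
      have hmem : (⟨k, by omega⟩ : Fin (u.length + 1)) ∈ S u a := Or.inl (by simpa using hget)
      rw [σ_spec u hred a _ hmem, pf, dif_pos (by simpa using hget)]

end RFAux

/-- A group `G` is residually finite if every nontrivial element survives in some
finite quotient. -/
def ResiduallyFinite (G : Type*) [Group G] : Prop :=
  ∀ g : G, g ≠ 1 → ∃ (F : Type) (_ : Group F) (_ : Finite F) (φ : G →* F), φ g ≠ 1

/-- Free groups are residually finite. -/
theorem freeGroup_residuallyFinite (α : Type*) : ResiduallyFinite (FreeGroup α) := by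
  intro g hg
  classical
  set w : List (α × Bool) := g.toWord with hw
  have hwred : FreeGroup.reduce w = w := FreeGroup.reduce_toWord g
  set u : List (α × Bool) := w.reverse with hu
  have hred : RFAux.Hred u := by
    intro j a b hj hj1
    have hj1' : j + 1 < u.length := (List.getElem?_eq_some_iff.mp hj1).choose
    have hj' : j < u.length := by omega
    have hlen : u.length = w.length := by simp [hu]
    set i : ℕ := w.length - 1 - (j + 1) with hi
    have hiw : i + 1 < w.length := by omega
    have e2q : w[i]? = some (a, !b) := by
      rw [← List.getElem?_reverse' (i := j + 1) (j := i) (by omega), ← hu]; exact hj1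
    have e1q : w[i+1]? = some (a, b) := by
      rw [← List.getElem?_reverse' (i := j) (j := i + 1) (by omega), ← hu]; exact hj
    have e2' : w[i] = (a, !b) := by
      have h := List.getElem?_eq_some_iff.mp e2q
      rw [h.choose_spec]
    have e1' : w[i+1] = (a, b) := by
      have h := List.getElem?_eq_some_iff.mp e1q
      rw [h.choose_spec]
    have hdecomp : w = w.take i ++ (a, !b) :: (a, !(!b)) :: w.drop (i + 2) := by
      conv_lhs => rw [← List.take_append_drop i w]
      congr 1
      rw [List.drop_eq_getElem_cons (by omega), e2']
      congr 1
      rw [List.drop_eq_getElem_cons (by omega), e1']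
      simp
    exact FreeGroup.reduce.not (by rw [hwred]; exact hdecomp)
  refine ⟨Equiv.Perm (Fin (u.length + 1)), inferInstance, inferInstance,
    FreeGroup.lift (RFAux.σ u hred), ?_⟩
  intro hcon
  have hφ : FreeGroup.lift (RFAux.σ u hred) g =
      ((w.map fun x => cond x.2 (RFAux.σ u hred x.1) (RFAux.σ u hred x.1)⁻¹)).prod := by
    conv_lhs => rw [← FreeGroup.mk_toWord (x := g)]
    exact FreeGroup.lift_mk
  have hkey := RFAux.key u hred u.length le_rfl
  rw [List.take_length] at hkey
  have hwu : w = u.reverse := by simp [hu]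
  rw [hcon] at hφ
  rw [hwu] at hφ
  rw [← hφ] at hkey
  simp only [Equiv.Perm.one_apply] at hkey
  have hlen0 : u.length = 0 := by
    have := congrArg Fin.val hkey
    simpa using this.symm
  have hwnil : w = [] := by
    have : w.length = 0 := by simpa [hu] using hlen0
    exact List.length_eq_zero_iff.mp this
  exact hg (FreeGroup.toWord_eq_nil_iff.mp (hw ▸ hwnil))
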